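/- (Cost of the diagonal alignments in the min-plus gadget) Fix integers p, q ≥ 1, matrices A ∈ [-E,E]^{p×q}, B ∈ [-E,E]^{q×r}, an index ℓ ∈ [0,r), and large constants E ≪ D ≪ F. With strings X_ℓ = x_0⋯x_{p-1} x_p^{(ℓ)} x_{p+1}⋯x_{2p} and Y = y_0⋯y_{2p+q-1} over disjoint alphabets, and the weight function w_{A,B} defined by: insertions and deletions cost F; w(x_i, y_{i+j}) = F + A_{i,j} − A_{i+1,j} + (q−j)D for i ∈ [0,p), j ∈ [0,q) (with A_{p,j} := 0); w(x_p^{(ℓ)}, y_{p+j}) = F + B_{j,ℓ}; w(x_{p+i}, y_{p+i+j}) = F + (j+1)D for i ∈ [1,p], j ∈ [0,q); all other substitutions cost 2F. Then for each i ∈ [0,p) and j ∈ [0,q), the alignment A_{i,j,ℓ} that inserts Y[0..i+j), substitutes X_ℓ[i..2p−i+1) diagonally onto Y[i+j..2p−i+j+1), and inserts the remaining suffix of Y, has total cost exactly |Y|·F + (p−i)(q+1)·D + A_{i,j} + B_{j,ℓ}. -/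

import Mathlib

abbrev Pt : Type := ℕ × ℕ

/-- A single step in an alignment path: right (deletion of an `X`-character),
down (insertion of a `Y`-character), or diagonal (aligning a pair of characters). -/
def AlignStep (p q : Pt) : Prop :=
  q = (p.1 + 1, p.2) ∨ q = (p.1, p.2 + 1) ∨ q = (p.1 + 1, p.2 + 1)

/-- `A` is a monotone lattice path from `s` to `t` in the alignment graph. -/
def IsPath (s t : Pt) (A : List Pt) : Prop :=
  A.head? = some s ∧ A.getLast? = some t ∧ A.Chain' AlignStep

/-- The edges (consecutive pairs) of a path. -/
def edges (A : List Pt) : List (Pt × Pt) := A.zip A.tail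

/-- Unweighted edit cost contributed by one edge: a diagonal edge costs 0 if the
two characters match and 1 otherwise (substitution); horizontal/vertical edges
(deletions/insertions) cost 1. -/
def edStep {α : Type*} [DecidableEq α] (X Y : List α) (e : Pt × Pt) : ℕ :=
  if e.2 = (e.1.1 + 1, e.1.2 + 1) then (if X[e.1.1]? = Y[e.1.2]? then 0 else 1) else 1

/-- The number of edits made by the alignment (path) `A` of `X` onto `Y`. -/
def edCost {α : Type*} [DecidableEq α] (X Y : List α) (A : List Pt) : ℕ :=
  ((edges A).map (edStep X Y)).sum

/-- Weighted cost contributed by one edge, under weight function `w` (with `none` playing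
the role of `ε`): diagonal edges cost `w X[x] Y[y]`, horizontal `w X[x] ε`, vertical `w ε Y[y]`. -/
noncomputable def wStep {α : Type*} (w : Option α → Option α → ℝ) (X Y : List α)
    (e : Pt × Pt) : ℝ :=
  if e.2 = (e.1.1 + 1, e.1.2 + 1) then w X[e.1.1]? Y[e.1.2]?
  else if e.2 = (e.1.1 + 1, e.1.2) then w X[e.1.1]? none
  else w none Y[e.1.2]?

/-- The weighted cost of the alignment (path) `A` of `X` onto `Y` under `w`. -/
noncomputable def wCost {α : Type*} (w : Option α → Option α → ℝ) (X Y : List α)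
    (A : List Pt) : ℝ :=
  ((edges A).map (wStep w X Y)).sum

/-- Unweighted (Levenshtein) edit distance. -/
noncomputable def ed {α : Type*} [DecidableEq α] (X Y : List α) : ℕ :=
  sInf { c | ∃ A, IsPath (0, 0) (X.length, Y.length) A ∧ edCost X Y A = c }

/-- Weighted edit distance under `w`. -/
noncomputable def wed {α : Type*} (w : Option α → Option α → ℝ) (X Y : List α) : ℝ :=
  sInf { c | ∃ A, IsPath (0, 0) (X.length, Y.length) A ∧ wCost w X Y A = c }

/-- A path contains no diagonal edge on the main diagonal,
i.e. it never aligns a character to itself. -/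
def NoSelfDiag (A : List Pt) : Prop :=
  ∀ e ∈ edges A, ¬ (e.1.1 = e.1.2 ∧ e.2 = (e.1.1 + 1, e.1.2 + 1))

/-- The self-edit distance of `X`: the minimum number of edits over all
self-alignments of `X` (alignments of `X` onto itself never aligning a character
to itself). -/
noncomputable def selfed {α : Type*} [DecidableEq α] (X : List α) : ℕ :=
  sInf { c | ∃ A, IsPath (0, 0) (X.length, X.length) A ∧ NoSelfDiag A ∧ edCost X X A = c }

/-- The fragment `X[a..b)`. -/
def frag {α : Type*} (X : List α) (a b : ℕ) : List α := (X.drop a).take (b - a)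

/-- Characters of the min-plus gadget: `(0, i)` is `x_i` (for `i ≠ p`), `(1, ℓ)` is the
special middle character `x_p^{(ℓ)}`, and `(2, m)` is `y_m`. -/
abbrev GChar : Type := ℕ × ℕ

/-- The gadget weight function `w_{A,B}` (with the convention `A p j = 0` imposed as a
hypothesis): insertions and deletions cost `F`; the allowed diagonal substitutions cost
`F` plus the structured lower-order terms; everything else costs `2F`. -/
noncomputable def gadgetW (p q : ℕ) (A B : ℕ → ℕ → ℤ) (D F : ℝ) :
    Option GChar → Option GChar → ℝ
  | some (0, i), some (2, m) =>
      if i < p ∧ i ≤ m ∧ m < i + q then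
        F + (A i (m - i) : ℝ) - (A (i + 1) (m - i) : ℝ) + ((q - (m - i) : ℕ) : ℝ) * D
      else if p + 1 ≤ i ∧ i ≤ 2 * p ∧ i ≤ m ∧ m < i + q then
        F + (((m - i) + 1 : ℕ) : ℝ) * D
      else 2 * F
  | some (1, l), some (2, m) =>
      if p ≤ m ∧ m < p + q then F + (B (m - p) l : ℝ) else 2 * F
  | some _, some _ => 2 * F
  | some _, none => F
  | none, some _ => F
  | none, none => 0

/-- The string `X_ℓ = x_0 ⋯ x_{p-1} x_p^{(ℓ)} x_{p+1} ⋯ x_{2p}` (of length `2p+1`). -/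
def gadgetX (p l : ℕ) : List GChar :=
  ((List.range p).map fun i => (0, i)) ++ [(1, l)] ++
    ((List.range p).map fun i => (0, p + 1 + i))

/-- The string `Y = y_0 ⋯ y_{2p+q-1}`. -/
def gadgetY (p q : ℕ) : List GChar := (List.range (2 * p + q)).map fun m => (2, m)

/-- The alignment `A_{i,j,ℓ}`: insert `Y[0..i+j)`, then go diagonally substituting
`X_ℓ[i..2p+1-i)` onto `Y[i+j..2p+1-i+j)`, then insert the remaining suffix of `Y`. -/
def gadgetPath (p q i j : ℕ) : List Pt :=
  ((List.range (i + j + 1)).map fun t => ((i, t) : Pt)) ++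
  ((List.range (2 * p + 1 - 2 * i)).map fun s => ((i + s + 1, i + j + s + 1) : Pt)) ++
  ((List.range (q + i - j - 1)).map fun t => ((2 * p + 1 - i, 2 * p + 1 - i + j + t + 1) : Pt))

lemma sum_map_range (f : ℕ → ℝ) (n : ℕ) : ((List.range n).map f).sum = ∑ k ∈ Finset.range n, f k := by
  induction n with
  | zero => simp
  | succ n ih => rw [List.range_succ]; simp [ih, Finset.sum_range_succ]

lemma edges_map_range (f : ℕ → Pt) (n : ℕ) :
    edges ((List.range n).map f) = (List.range (n-1)).map (fun k => (f k, f (k+1))) := by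
  apply List.ext_getElem
  · simp [edges]
  · intro k h1 h2
    simp only [edges, List.getElem_zip, List.getElem_tail, List.getElem_map, List.getElem_range,
      List.length_map, List.length_range] at *

lemma gadgetPath_eq (p q i j : ℕ) (hi : i < p) (hj : j < q) :
    gadgetPath p q i j =
      (List.range (2*p+q+1)).map (fun u => ((min (max i (u - j)) (2*p+1-i), u) : Pt)) := by
  apply List.ext_getElem
  · simp [gadgetPath]; omega
  · intro k h1 h2
    simp only [gadgetPath, List.length_map, List.length_range, List.length_append] at h1 h2 ⊢
    rcases Nat.lt_or_ge k (i+j+1) with h | h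
    · rw [List.getElem_append_left (by simp; omega), List.getElem_append_left (by simp; omega)]
      simp; omega
    · rcases Nat.lt_or_ge k ((i+j+1) + (2*p+1-2*i)) with h' | h'
      · rw [List.getElem_append_left (by simp; omega), List.getElem_append_right (by simp; omega)]
        simp; omega
      · rw [List.getElem_append_right (by simp; omega)]
        simp; omega

lemma gadgetY_get (p q m : ℕ) (h : m < 2*p+q) : (gadgetY p q)[m]? = some (2, m) := by
  simp [gadgetY, h]

lemma gadgetX_get_lt (p l a : ℕ) (h : a < p) : (gadgetX p l)[a]? = some (0, a) := by
  simp [gadgetX, List.getElem?_append_left, h]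

lemma gadgetX_get_mid (p l : ℕ) : (gadgetX p l)[p]? = some (1, l) := by
  simp [gadgetX]

lemma gadgetX_get_gt (p l a : ℕ) (h1 : p < a) (h2 : a ≤ 2*p) :
    (gadgetX p l)[a]? = some (0, a) := by
  simp [gadgetX]
  rw [List.getElem?_append_right (by simp; omega)]
  simp only [List.length_map, List.length_range]
  have e : a - p = (a - p - 1) + 1 := by omega
  rw [e, List.getElem?_cons_succ, List.getElem?_map, List.getElem?_range (show a-p-1 < p by omega)]
  simp; omega

section
variable (p q : ℕ) (A B : ℕ → ℕ → ℤ) (D F : ℝ)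

lemma gadgetW_ins (c : GChar) : gadgetW p q A B D F none (some c) = F := by
  simp [gadgetW]

lemma gadgetW_0 (a m : ℕ) : gadgetW p q A B D F (some (0, a)) (some (2, m)) =
    (if a < p ∧ a ≤ m ∧ m < a + q then
        F + (A a (m - a) : ℝ) - (A (a + 1) (m - a) : ℝ) + ((q - (m - a) : ℕ) : ℝ) * D
      else if p + 1 ≤ a ∧ a ≤ 2 * p ∧ a ≤ m ∧ m < a + q then
        F + (((m - a) + 1 : ℕ) : ℝ) * D
      else 2 * F) := by
  rfl

lemma gadgetW_1 (a m : ℕ) : gadgetW p q A B D F (some (1, a)) (some (2, m)) =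
    (if p ≤ m ∧ m < p + q then F + (B (m - p) a : ℝ) else 2 * F) := by
  rfl
end
/-- Cost of the diagonal alignments in the min-plus gadget: for
`i ∈ [0,p)`, `j ∈ [0,q)`, the alignment `A_{i,j,ℓ}` (a path from `(i,0)` to
`(2p+1-i, 2p+q)` in the alignment graph of `X_ℓ` and `Y`) has total cost exactly
`|Y|·F + (p-i)(q+1)·D + A_{i,j} + B_{j,ℓ}`. -/
theorem gadget_alignment_cost (p q r E : ℕ) (hp : 1 ≤ p) (hq : 1 ≤ q)
    (A B : ℕ → ℕ → ℤ) (hAp : ∀ j, A p j = 0)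
    (hE : ∀ i j, |A i j| ≤ (E : ℤ) ∧ |B i j| ≤ (E : ℤ))
    (D F : ℝ)
    (hED : (E : ℝ) * (((2 * p + 1) + (2 * p + q) : ℕ) : ℝ) < D)
    (hDF : D * (((2 * p + 1) + (2 * p + q) : ℕ) : ℝ) < F)
    (l i j : ℕ) (hl : l < r) (hi : i < p) (hj : j < q) :
    IsPath (i, 0) (2 * p + 1 - i, 2 * p + q) (gadgetPath p q i j) ∧
    wCost (gadgetW p q A B D F) (gadgetX p l) (gadgetY p q) (gadgetPath p q i j) =
      ((2 * p + q : ℕ) : ℝ) * F + ((p - i : ℕ) : ℝ) * ((q : ℝ) + 1) * D +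
        (A i j : ℝ) + (B j l : ℝ) := by
  have hpath := gadgetPath_eq p q i j hi hj
  set g : ℕ → Pt := fun u => ((min (max i (u - j)) (2*p+1-i), u) : Pt) with hg
  constructor
  · refine ⟨?_, ?_, ?_⟩
    · rw [hpath, List.head?_eq_getElem?]
      simp [hg]
      omega
    · rw [hpath, List.getLast?_eq_getElem?]
      simp [hg]
      omega
    · rw [hpath, show List.Chain' AlignStep _ ↔ List.IsChain AlignStep _ from Iff.rfl, List.isChain_map]
      have : 2*p+q+1 = (2*p+q).succ := rfl
      rw [this, List.isChain_range_succ]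
      intro m hm
      simp only [AlignStep, hg, Prod.mk.injEq, Nat.succ_eq_add_one, min_def, max_def, and_true]
      split_ifs <;> omega
  · rw [hpath]
    simp only [wCost]
    rw [edges_map_range, Nat.add_sub_cancel, List.map_map, sum_map_range]
    simp only [Function.comp]
    -- abbreviations
    have hgk : ∀ k, k ≤ i+j → g k = (i, k) := by
      intro k hk
      simp only [hg, Prod.mk.injEq, min_def, max_def, and_true]
      split_ifs <;> omega
    have hgm : ∀ k, i+j ≤ k → k ≤ 2*p+1-i+j → g k = (k - j, k) := by
      intro k hk1 hk2
      simp only [hg, Prod.mk.injEq, min_def, max_def, and_true]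
      split_ifs <;> omega
    have hgl : ∀ k, 2*p+1-i+j ≤ k → g k = (2*p+1-i, k) := by
      intro k hk
      simp only [hg, Prod.mk.injEq, min_def, max_def, and_true]
      split_ifs <;> omega
    have hv1 : ∀ k ∈ Finset.Ico 0 (i+j),
        wStep (gadgetW p q A B D F) (gadgetX p l) (gadgetY p q) (g k, g (k+1)) = F := by
      intro k hk
      simp only [Finset.mem_Ico] at hk
      rw [hgk k (by omega), hgk (k+1) (by omega)]
      simp only [wStep]
      rw [if_neg (by simp), if_neg (by simp), gadgetY_get p q k (by omega), gadgetW_ins]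
    have hv3 : ∀ k ∈ Finset.Ico (2*p+1-i+j) (2*p+q),
        wStep (gadgetW p q A B D F) (gadgetX p l) (gadgetY p q) (g k, g (k+1)) = F := by
      intro k hk
      simp only [Finset.mem_Ico] at hk
      rw [hgl k (by omega), hgl (k+1) (by omega)]
      simp only [wStep]
      rw [if_neg (by simp), if_neg (by simp), gadgetY_get p q k (by omega), gadgetW_ins]
    have hd1 : ∀ t ∈ Finset.Ico 0 (p-i),
        wStep (gadgetW p q A B D F) (gadgetX p l) (gadgetY p q) (g (i+j+t), g (i+j+t+1)) =
        (F + ((q-j : ℕ) : ℝ) * D) + ((A (i+t) j : ℝ) - (A (i+t+1) j : ℝ)) := by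
      intro t ht
      simp only [Finset.mem_Ico] at ht
      rw [hgm _ (by omega) (by omega), hgm _ (by omega) (by omega)]
      have e1 : i+j+t-j = i+t := by omega
      have e2 : i+j+t+1-j = i+t+1 := by omega
      rw [e1, e2]
      simp only [wStep]
      rw [if_pos trivial, gadgetX_get_lt p l (i+t) (by omega),
        gadgetY_get p q (i+j+t) (by omega), gadgetW_0,
        if_pos ⟨by omega, by omega, by omega⟩]
      have e3 : i+j+t - (i+t) = j := by omega
      rw [e3]; ring
    have hd2 :
        wStep (gadgetW p q A B D F) (gadgetX p l) (gadgetY p q) (g (i+j+(p-i)), g (i+j+(p-i)+1)) =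
        F + (B j l : ℝ) := by
      rw [hgm _ (by omega) (by omega), hgm _ (by omega) (by omega)]
      have e1 : i+j+(p-i)-j = p := by omega
      have e2 : i+j+(p-i)+1-j = p+1 := by omega
      rw [e1, e2]
      simp only [wStep]
      rw [if_pos trivial, gadgetX_get_mid, gadgetY_get p q _ (by omega), gadgetW_1,
        if_pos ⟨by omega, by omega⟩]
      have e3 : i+j+(p-i) - p = j := by omega
      rw [e3]
    have hd3 : ∀ t ∈ Finset.Ico (p-i+1) (2*p+1-2*i),
        wStep (gadgetW p q A B D F) (gadgetX p l) (gadgetY p q) (g (i+j+t), g (i+j+t+1)) =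
        F + ((j+1 : ℕ) : ℝ) * D := by
      intro t ht
      simp only [Finset.mem_Ico] at ht
      rw [hgm _ (by omega) (by omega), hgm _ (by omega) (by omega)]
      have e1 : i+j+t-j = i+t := by omega
      have e2 : i+j+t+1-j = i+t+1 := by omega
      rw [e1, e2]
      simp only [wStep]
      rw [if_pos trivial, gadgetX_get_gt p l (i+t) (by omega) (by omega),
        gadgetY_get p q (i+j+t) (by omega), gadgetW_0,
        if_neg (by omega), if_pos ⟨by omega, by omega, by omega, by omega⟩]
      have e3 : i+j+t - (i+t) = j := by omega
      rw [e3]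
    rw [Finset.range_eq_Ico,
      ← Finset.sum_Ico_consecutive _ (Nat.zero_le (i+j)) (show i+j ≤ 2*p+q by omega),
      ← Finset.sum_Ico_consecutive _ (show i+j ≤ 2*p+1-i+j by omega) (show 2*p+1-i+j ≤ 2*p+q by omega),
      Finset.sum_congr rfl hv1, Finset.sum_congr rfl hv3, Finset.sum_const, Finset.sum_const,
      Nat.card_Ico, Nat.card_Ico, Finset.sum_Ico_eq_sum_range]
    have en : 2*p+1-i+j - (i+j) = 2*p+1-2*i := by omega
    rw [en, Finset.range_eq_Ico,
      ← Finset.sum_Ico_consecutive _ (Nat.zero_le (p-i)) (show p-i ≤ 2*p+1-2*i by omega),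
      ← Finset.sum_Ico_consecutive _ (show p-i ≤ p-i+1 by omega) (show p-i+1 ≤ 2*p+1-2*i by omega),
      Nat.Ico_succ_singleton, Finset.sum_singleton,
      Finset.sum_congr rfl hd1, Finset.sum_congr rfl hd3, hd2,
      Finset.sum_add_distrib, Finset.sum_const, Finset.sum_const, Nat.card_Ico, Nat.card_Ico]
    rw [← Finset.range_eq_Ico]
    simp only [show ∀ x : ℕ, i + x + 1 = i + (x+1) from fun x => by omega]
    rw [Finset.sum_range_sub' (fun t => (A (i+t) j : ℝ))]
    have e4 : i + (p-i) = p := by omega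
    rw [e4, hAp j]
    have e5 : 2*p+1-2*i - (p-i+1) = p-i := by omega
    have e6 : 2*p+q - (2*p+1-i+j) = (q-(j+1))+i := by omega
    rw [e5, e6]
    simp only [nsmul_eq_mul, Nat.sub_zero, Nat.add_zero, Int.cast_zero]
    push_cast [Nat.cast_sub (show j ≤ q by omega), Nat.cast_sub (show i ≤ p by omega),
      Nat.cast_sub (show j+1 ≤ q by omega)]
    ring
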